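/- arXiv:2402.18961 — 2 statements merged into one kernel-verified Lean document; each statement's English description precedes it below -/
import Mathlib

section
/- Let N, k ∈ ℕ* with k ≤ N, let 1 ≤ j_1 < … < j_k ≤ N, let m_1 < m_2 < … < m_N < n be natural numbers with m_1 = 1, set m_{N+1} := n, and let I_j := (m_j, m_{j+1}] ∩ ℕ for j = 1,…,N and I_s^N := I_s ∪ … ∪ I_N. Let r_1, …, r_k be pairwise distinct with r_h ∈ I_{j_h}^N for each h, and set j_{k+1} := N+1. Then ∑_{h=1}^{k} |(m_{j_h}, r_h) ∩ {m_1,…,m_N} ∩ ({m_{j_1},…,m_{j_k}})ᶜ| = ∑_{p=1}^{k-1} ∑_{s : j_p < s < j_{p+1}} |I_s^N ∩ {r_1,…,r_p}| + ∑_{s > j_k, s ≤ N} |I_s^N ∩ {r_1,…,r_k}|. -/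
open Finset

lemma tele (g : ℕ → ℕ) (f : ℕ → ℕ) (k : ℕ)
    (hg : ∀ i j, 1 ≤ i → i ≤ j → j ≤ k + 1 → g i ≤ g j) :
    ∑ p ∈ Icc 1 k, ∑ s ∈ Ioc (g p) (g (p + 1)), f s
      = ∑ s ∈ Ioc (g 1) (g (k + 1)), f s := by
  induction k with
  | zero => simp
  | succ k ih =>
    rw [Finset.sum_Icc_succ_top (by omega : 1 ≤ k + 1),
      ih (fun i j h1 h2 h3 => hg i j h1 h2 (by omega)),
      Finset.sum_Ioc_consecutive _ (hg 1 (k+1) le_rfl (by omega) (by omega))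
        (hg (k+1) (k+2) (by omega) (by omega) (by omega))]

lemma biu (m : ℕ → ℕ) (a : ℕ) (b : ℕ) (hab : a ≤ b)
    (hmono : ∀ i j, a ≤ i → i ≤ j → j ≤ b + 1 → m i ≤ m j) :
    (Icc a b).biUnion (fun t => Ioc (m t) (m (t + 1))) = Ioc (m a) (m (b + 1)) := by
  induction b with
  | zero =>
    have : a = 0 := by omega
    subst this; simp
  | succ b ih =>
    rcases Nat.eq_or_lt_of_le hab with h | h
    · subst h; simp
    · have hab' : a ≤ b := by omega
      rw [show Icc a (b+1) = insert (b+1) (Icc a b) by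
          ext x; simp; omega,
        Finset.biUnion_insert,
        ih hab' (fun i j h1 h2 h3 => hmono i j h1 h2 (by omega)),
        Finset.union_comm,
        Finset.Ioc_union_Ioc_eq_Ioc (hmono a (b+1) le_rfl (by omega) (by omega))
          (hmono (b+1) (b+2) (by omega) (by omega) (by omega))]

lemma card_inter_image {A s : Finset ℕ} {f : ℕ → ℕ} (hf : Set.InjOn f s) :
    (A ∩ s.image f).card = (s.filter (fun a => f a ∈ A)).card := by
  rw [inter_comm, ← Finset.filter_mem_eq_inter, Finset.filter_image,
    Finset.card_image_of_injOn (hf.mono (by intro x hx; simp at hx; exact hx.1))]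


/-- the key combinatorial identity (QuanAlg14f):
`∑_{h=1}^k |(m_{j_h}, r_h) ∩ {m_1,…,m_N} ∩ ({m_{j_1},…,m_{j_k}})ᶜ|
 = ∑_{p=1}^{k-1} ∑_{j_p<s<j_{p+1}} |I_s^N ∩ {r_1,…,r_p}|
   + ∑_{j_k<s≤N} |I_s^N ∩ {r_1,…,r_k}|`. -/
theorem quon_weight_key_identity (N k n : ℕ) (hk : 1 ≤ k) (hkN : k ≤ N)
    (m : ℕ → ℕ) (hm : StrictMonoOn m (Set.Icc 1 (N + 1)))
    (hm1 : m 1 = 1) (hmN : m N < n) (hmN1 : m (N + 1) = n)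
    (j : ℕ → ℕ) (hjmono : StrictMonoOn j (Set.Icc 1 (k + 1)))
    (hj1 : 1 ≤ j 1) (hjk : j k ≤ N) (hjk1 : j (k + 1) = N + 1)
    (r : ℕ → ℕ)
    (hr : ∀ h ∈ Finset.Icc 1 k,
      r h ∈ (Finset.Icc (j h) N).biUnion (fun t => Finset.Ioc (m t) (m (t + 1))))
    (hrinj : Set.InjOn r (Set.Icc 1 k)) :
    ∑ h ∈ Finset.Icc 1 k,
      ((Finset.Ioo (m (j h)) (r h) ∩ (Finset.Icc 1 N).image m) \
        (Finset.Icc 1 k).image (fun p => m (j p))).card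
      = ∑ p ∈ Finset.Icc 1 (k - 1), ∑ s ∈ Finset.Ioo (j p) (j (p + 1)),
          (((Finset.Icc s N).biUnion (fun t => Finset.Ioc (m t) (m (t + 1)))) ∩
            (Finset.Icc 1 p).image r).card
        + ∑ s ∈ Finset.Ioc (j k) N,
            (((Finset.Icc s N).biUnion (fun t => Finset.Ioc (m t) (m (t + 1)))) ∩
              (Finset.Icc 1 k).image r).card := by
  classical
  obtain ⟨K, rfl⟩ : ∃ K, k = K + 1 := ⟨k - 1, by omega⟩
  simp only [Nat.add_sub_cancel]
  -- basic monotonicity facts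
  have hmle : ∀ {i i'}, 1 ≤ i → i ≤ i' → i' ≤ N + 1 → m i ≤ m i' := fun {i i'} h1 h2 h3 =>
    hm.monotoneOn ⟨h1, by omega⟩ ⟨by omega, h3⟩ h2
  have hjle : ∀ {p q}, 1 ≤ p → p ≤ q → q ≤ K + 2 → j p ≤ j q := fun {p q} h1 h2 h3 =>
    hjmono.monotoneOn ⟨h1, by omega⟩ ⟨by omega, by omega⟩ h2
  have hjlt : ∀ {p q}, 1 ≤ p → p < q → q ≤ K + 2 → j p < j q := fun {p q} h1 h2 h3 =>
    hjmono ⟨h1, by omega⟩ ⟨by omega, by omega⟩ h2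
  have hjpos : ∀ p, 1 ≤ p → p ≤ K + 2 → 1 ≤ j p := fun p h1 h2 =>
    le_trans hj1 (hjle le_rfl h1 h2)
  have hjN : ∀ p, 1 ≤ p → p ≤ K + 1 → j p ≤ N := fun p h1 h2 =>
    le_trans (hjle h1 h2 (by omega)) hjk
  -- bounds on r
  have hrb : ∀ h, 1 ≤ h → h ≤ K + 1 → m (j h) < r h ∧ r h ≤ n := by
    intro h h1 h2
    have := hr h (by simp [h1, h2])
    simp only [Finset.mem_biUnion, Finset.mem_Icc, Finset.mem_Ioc] at this
    obtain ⟨t, ⟨ht1, ht2⟩, ht3, ht4⟩ := this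
    have hjh1 : 1 ≤ j h := hjpos h h1 (by omega)
    refine ⟨lt_of_le_of_lt (hmle hjh1 ht1 (by omega)) ht3, ?_⟩
    calc r h ≤ m (t + 1) := ht4
      _ ≤ m (N + 1) := hmle (by omega) (by omega) le_rfl
      _ = n := hmN1
  set J : Finset ℕ := (Icc 1 (K + 1)).image j with hJdef
  set F : ℕ → ℕ :=
    fun s => ((Icc 1 (K + 1)).filter (fun h => j h < s ∧ m s < r h)).card with hFdef
  set G : ℕ → ℕ := fun s => if s ∈ J then 0 else F s with hGdef
  have hJiff : ∀ t, t ∈ J ↔ ∃ q, (1 ≤ q ∧ q ≤ K + 1) ∧ j q = t := by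
    intro t; simp [hJdef]
  -- s strictly between consecutive j's is not in J
  have hnotJ : ∀ p s, 1 ≤ p → p ≤ K + 1 → j p < s → s < j (p + 1) → s ∉ J := by
    intro p s hp1 hp2 hs1 hs2 hsJ
    obtain ⟨q, ⟨hq1, hq2⟩, rfl⟩ := (hJiff _).1 hsJ
    rcases le_or_gt q p with h | h
    · exact absurd (hjle hq1 h (by omega)) (by omega)
    · exact absurd (hjle (by omega) h (by omega) : j (p+1) ≤ j q) (by omega)
  have hnotJ' : ∀ s, j (K + 1) < s → s ∉ J := by
    intro s hs hsJ
    obtain ⟨q, ⟨hq1, hq2⟩, rfl⟩ := (hJiff _).1 hsJ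
    exact absurd (hjle hq1 hq2 (by omega)) (by omega)
  -- gap identification of F
  have hgapF : ∀ p s, 1 ≤ p → p ≤ K + 1 → j p < s → s < j (p + 1) →
      F s = ((Icc 1 p).filter (fun h => m s < r h)).card := by
    intro p s hp1 hp2 hs1 hs2
    suffices hset : ((Icc 1 (K + 1)).filter (fun h => j h < s ∧ m s < r h))
        = ((Icc 1 p).filter (fun h => m s < r h)) by
      simp only [hFdef]; rw [hset]
    ext h
    simp only [mem_filter, mem_Icc]
    constructor
    · rintro ⟨⟨h1, h2⟩, h3, h4⟩
      refine ⟨⟨h1, ?_⟩, h4⟩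
      by_contra hc
      exact absurd (hjle (by omega) (by omega : p + 1 ≤ h) (by omega)) (by omega)
    · rintro ⟨⟨h1, h2⟩, h4⟩
      exact ⟨⟨h1, by omega⟩, lt_of_le_of_lt (hjle h1 h2 (by omega)) hs1, h4⟩
  have hgapF' : ∀ s, j (K + 1) < s → s ≤ N →
      F s = ((Icc 1 (K + 1)).filter (fun h => m s < r h)).card := by
    intro s hs1 hs2
    exact hgapF (K + 1) s (by omega) le_rfl hs1 (by rw [hjk1]; omega)
  -- vanishing of F below j 1
  have hF0 : ∀ t, t ≤ j 1 → F t = 0 := by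
    intro t ht
    rw [hFdef]
    rw [Finset.card_eq_zero, Finset.filter_eq_empty_iff]
    intro h hh
    simp only [mem_Icc] at hh
    rintro ⟨h1, _⟩
    exact absurd (hjle le_rfl hh.1 (by omega)) (by omega)
  -- LHS computation
  have hLh : ∀ h, 1 ≤ h → h ≤ K + 1 →
      ((Ioo (m (j h)) (r h) ∩ (Icc 1 N).image m) \ (Icc 1 (K + 1)).image (fun p => m (j p)))
        = ((Icc 1 N).filter (fun t => (j h < t ∧ m t < r h) ∧ t ∉ J)).image m := by
    intro h h1 h2
    ext x
    simp only [mem_sdiff, mem_inter, mem_Ioo, mem_image, mem_filter, mem_Icc, not_exists]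
    constructor
    · rintro ⟨⟨⟨hx1, hx2⟩, ⟨t, ⟨ht1, htN⟩, rfl⟩⟩, hx3⟩
      refine ⟨t, ⟨⟨ht1, htN⟩, ⟨?_, hx2⟩, ?_⟩, rfl⟩
      · by_contra hc
        push_neg at hc
        exact absurd (hmle ht1 hc (by have := hjN h h1 h2; omega)) (not_le.2 hx1)
      · intro htJ
        obtain ⟨q, ⟨hq1, hq2⟩, rfl⟩ := (hJiff _).1 htJ
        exact hx3 q ⟨by simp [hq1, hq2], rfl⟩
    · rintro ⟨t, ⟨⟨ht1, htN⟩, ⟨hjt, hmt⟩, htJ⟩, rfl⟩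
      have hjh1 : 1 ≤ j h := hjpos h h1 (by omega)
      have hjhN : j h ≤ N := hjN h h1 h2
      refine ⟨⟨⟨hm ⟨hjh1, by omega⟩ ⟨by omega, by omega⟩ hjt, hmt⟩,
        ⟨t, ⟨ht1, htN⟩, rfl⟩⟩, ?_⟩
      rintro q ⟨hq0, hqe⟩
      have hq : 1 ≤ q ∧ q ≤ K + 1 := by simpa using hq0
      have : j q = t := by
        refine hm.injOn ⟨hjpos q hq.1 (by omega), by have := hjN q hq.1 hq.2; omega⟩
          ⟨by omega, by omega⟩ hqe
      exact htJ ((hJiff t).2 ⟨q, ⟨hq.1, hq.2⟩, this⟩)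
  have hL : ∑ h ∈ Icc 1 (K + 1),
      ((Ioo (m (j h)) (r h) ∩ (Icc 1 N).image m) \
        (Icc 1 (K + 1)).image (fun p => m (j p))).card
      = ∑ t ∈ Icc 1 N, G t := by
    have step : ∀ h ∈ Icc 1 (K + 1),
        ((Ioo (m (j h)) (r h) ∩ (Icc 1 N).image m) \
          (Icc 1 (K + 1)).image (fun p => m (j p))).card
        = ((Icc 1 N).filter (fun t => (j h < t ∧ m t < r h) ∧ t ∉ J)).card := by
      intro h hh
      simp only [mem_Icc] at hh
      rw [hLh h hh.1 hh.2]
      apply Finset.card_image_of_injOn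
      apply hm.injOn.mono
      intro x hx
      simp only [coe_filter, Set.mem_setOf_eq, mem_Icc] at hx
      exact ⟨hx.1.1, by omega⟩
    rw [Finset.sum_congr rfl step]
    simp only [Finset.card_filter]
    rw [Finset.sum_comm]
    refine Finset.sum_congr rfl fun t _ => ?_
    by_cases htJ : t ∈ J
    · simp [hGdef, htJ]
    · simp only [hGdef, htJ, if_false, hFdef, Finset.card_filter, not_false_iff, and_true]
  -- RHS inner card computation
  have hinner : ∀ p s, 1 ≤ p → p ≤ K + 1 → 1 ≤ s → s ≤ N →
      (((Icc s N).biUnion (fun t => Ioc (m t) (m (t + 1)))) ∩ (Icc 1 p).image r).card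
        = ((Icc 1 p).filter (fun h => m s < r h)).card := by
    intro p s hp1 hp2 hs1 hs2
    rw [biu m s N hs2 (fun i i' h1 h2 h3 => hmle (by omega) h2 h3), hmN1]
    rw [card_inter_image (hrinj.mono (by
      intro x hx
      simp only [coe_Icc, Set.mem_Icc] at hx ⊢
      omega))]
    refine congrArg Finset.card (Finset.filter_congr fun h hh0 => ?_)
    have hh : 1 ≤ h ∧ h ≤ p := by simpa using hh0
    simp only [mem_Ioc]
    have := (hrb h hh.1 (by omega)).2
    constructor
    · rintro ⟨h1, _⟩; exact h1
    · intro h1; exact ⟨h1, this⟩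
  -- now assemble
  have hj1N : j 1 ≤ N := hjN 1 le_rfl (by omega)
  have hjK1N : j (K + 1) ≤ N := hjk
  calc ∑ h ∈ Icc 1 (K + 1),
      ((Ioo (m (j h)) (r h) ∩ (Icc 1 N).image m) \
        (Icc 1 (K + 1)).image (fun p => m (j p))).card
      = ∑ t ∈ Icc 1 N, G t := hL
    _ = ∑ t ∈ Ioc 0 N, G t := by
        apply Finset.sum_congr _ (fun _ _ => rfl)
        ext x; simp; omega
    _ = ∑ t ∈ Ioc 0 (j 1), G t + ∑ t ∈ Ioc (j 1) N, G t :=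
        (Finset.sum_Ioc_consecutive _ (by omega) hj1N).symm
    _ = ∑ t ∈ Ioc (j 1) N, G t := by
        rw [Finset.sum_eq_zero, zero_add]
        intro t ht
        simp only [mem_Ioc] at ht
        by_cases htJ : t ∈ J
        · simp [hGdef, htJ]
        · simp [hGdef, htJ, hF0 t ht.2]
    _ = ∑ t ∈ Ioc (j 1) (j (K + 1)), G t + ∑ t ∈ Ioc (j (K + 1)) N, G t :=
        (Finset.sum_Ioc_consecutive _ (hjle le_rfl (by omega) (by omega)) hjK1N).symm
    _ = ∑ p ∈ Icc 1 K, ∑ s ∈ Ioc (j p) (j (p + 1)), G s + ∑ t ∈ Ioc (j (K + 1)) N, G t := by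
        rw [tele j G K (fun i i' h1 h2 h3 => hjle h1 h2 (by omega))]
    _ = ∑ p ∈ Icc 1 K, ∑ s ∈ Ioo (j p) (j (p + 1)),
          (((Icc s N).biUnion (fun t => Ioc (m t) (m (t + 1)))) ∩ (Icc 1 p).image r).card
        + ∑ s ∈ Ioc (j (K + 1)) N,
          (((Icc s N).biUnion (fun t => Ioc (m t) (m (t + 1)))) ∩
            (Icc 1 (K + 1)).image r).card := by
        congr 1
        · apply Finset.sum_congr rfl
          intro p hp
          simp only [mem_Icc] at hp
          have hplt : j p < j (p + 1) := hjlt hp.1 (by omega) (by omega)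
          rw [show Ioc (j p) (j (p + 1)) = insert (j (p + 1)) (Ioo (j p) (j (p + 1))) by
            ext x; simp; omega]
          rw [Finset.sum_insert (by simp)]
          have : G (j (p + 1)) = 0 := by
            simp [hGdef, (hJiff (j (p + 1))).2 ⟨p + 1, ⟨by omega, by omega⟩, rfl⟩]
          rw [this, zero_add]
          apply Finset.sum_congr rfl
          intro s hs
          simp only [mem_Ioo] at hs
          have hs1 : 1 ≤ s := by
            have := hjpos p hp.1 (by omega); omega
          have hs2 : s ≤ N := by
            have := hjN (p + 1) (by omega) (by omega); omega
          rw [hinner p s hp.1 (by omega) hs1 hs2]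
          simp [hGdef, hnotJ p s hp.1 (by omega) hs.1 hs.2,
            hgapF p s hp.1 (by omega) hs.1 hs.2]
        · apply Finset.sum_congr rfl
          intro s hs
          simp only [mem_Ioc] at hs
          have hs1 : 1 ≤ s := by
            have := hjpos (K + 1) (by omega) (by omega); omega
          rw [hinner (K + 1) s (by omega) le_rfl hs1 hs.2]
          simp [hGdef, hnotJ' s hs.1, hgapF' s hs.1 hs.2]
end

section
/- Let ℋ be a pre-Hilbert space, q ∈ [-1,1], n ≥ 2, and let λ_n be the q-symmetrization operator on ℋ^{⊗n} defined by λ_n(g_1 ⊗ … ⊗ g_n) := ∑_{σ∈𝔖_n} q^{ρ(σ)} g_{σ(1)} ⊗ … ⊗ g_{σ(n)}. Then for all f ∈ ℋ, G ∈ ℋ^{⊗(n-1)}, and f_1,…,f_n ∈ ℋ: ⟨f ⊗ G, λ_n(f_1 ⊗ … ⊗ f_n)⟩_{⊗n} = ∑_{k=1}^{n} q^{k-1} ⟨f, f_k⟩ · ⟨G, λ_{n-1}(f_1 ⊗ … ⊗ f_{k-1} ⊗ f_{k+1} ⊗ … ⊗ f_n)⟩_{⊗(n-1)}. -/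
/-- Number of inversions of a permutation of `Fin n`. -/
def inversions {n : ℕ} (σ : Equiv.Perm (Fin n)) : ℕ :=
  (Finset.univ.filter (fun p : Fin n × Fin n => p.1 < p.2 ∧ σ p.2 < σ p.1)).card

def Phi {N : ℕ} (k : Fin (N + 1)) (τ : Equiv.Perm (Fin N)) : Equiv.Perm (Fin (N + 1)) :=
  ((finSuccEquiv N).trans (Equiv.optionCongr τ)).trans (finSuccEquiv' k).symm

@[simp] lemma Phi_zero {N : ℕ} (k : Fin (N + 1)) (τ : Equiv.Perm (Fin N)) :
    Phi k τ 0 = k := by simp [Phi]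

@[simp] lemma Phi_succ {N : ℕ} (k : Fin (N + 1)) (τ : Equiv.Perm (Fin N)) (i : Fin N) :
    Phi k τ i.succ = k.succAbove (τ i) := by simp [Phi]

lemma Phi_bijective {N : ℕ} :
    Function.Bijective (fun p : Fin (N + 1) × Equiv.Perm (Fin N) => Phi p.1 p.2) := by
  rw [Fintype.bijective_iff_injective_and_card]
  constructor
  · rintro ⟨k, τ⟩ ⟨k', τ'⟩ h
    simp only at h
    have hk : k = k' := by
      have := congrArg (fun σ : Equiv.Perm (Fin (N+1)) => σ 0) h
      simpa using this
    subst hk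
    have hτ : τ = τ' := by
      ext i
      have := congrArg (fun σ : Equiv.Perm (Fin (N+1)) => σ i.succ) h
      simp only [Phi_succ] at this
      have := Fin.succAbove_right_injective this
      exact congrArg Fin.val this
    rw [hτ]
  · simp [Fintype.card_perm, Nat.factorial_succ]

lemma card_filter_val_lt {N : ℕ} (k : Fin (N + 1)) :
    (Finset.univ.filter fun j : Fin N => (j : ℕ) < (k : ℕ)).card = (k : ℕ) := by
  rw [show (k : ℕ) = (Finset.range (k : ℕ)).card from (Finset.card_range _).symm]
  apply Finset.card_nbij (fun j : Fin N => (j : ℕ))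
  · intro a ha; simp_all
  · intro a _ b _ h; exact Fin.val_injective h
  · intro m hm
    simp only [Finset.coe_range, Set.mem_Iio] at hm
    have hmN : m < N := lt_of_lt_of_le hm (Nat.lt_succ_iff.mp k.isLt)
    exact ⟨⟨m, hmN⟩, by simp [hm], rfl⟩

lemma inversions_Phi {N : ℕ} (k : Fin (N + 1)) (τ : Equiv.Perm (Fin N)) :
    inversions (Phi k τ) = (k : ℕ) + inversions τ := by
  unfold inversions
  rw [← Finset.card_filter_add_card_filter_not
    (p := fun p : Fin (N + 1) × Fin (N + 1) => p.1 = 0), Finset.filter_filter,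
    Finset.filter_filter]
  congr 1
  · -- pairs with first coordinate 0
    have h1 : (Finset.univ.filter fun j : Fin N => (τ j : ℕ) < (k : ℕ)).card
        = (Finset.univ.filter fun p : Fin (N + 1) × Fin (N + 1) =>
            (p.1 < p.2 ∧ Phi k τ p.2 < Phi k τ p.1) ∧ p.1 = 0).card := by
      apply Finset.card_nbij (fun j : Fin N => ((0 : Fin (N + 1)), j.succ))
      · intro a ha
        simp only [Finset.mem_coe, Finset.mem_filter, Finset.mem_univ, true_and] at ha ⊢
        refine ⟨⟨Fin.succ_pos a, ?_⟩, trivial⟩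
        simp only [Phi_zero, Phi_succ]
        rw [Fin.succAbove_lt_iff_castSucc_lt]
        simpa [Fin.lt_def] using ha
      · intro a _ b _ h
        exact Fin.succ_injective _ (congrArg Prod.snd h)
      · intro p hp
        simp only [Finset.coe_filter, Set.mem_setOf_eq, Finset.mem_univ, true_and] at hp
        obtain ⟨⟨hlt, hσ⟩, h0⟩ := hp
        have hne : p.2 ≠ 0 := by
          intro h; rw [h0, h] at hlt; exact lt_irrefl _ hlt
        obtain ⟨j, hj⟩ := Fin.exists_succ_eq_of_ne_zero hne
        refine ⟨j, ?_, ?_⟩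
        · simp only [Finset.coe_filter, Set.mem_setOf_eq, Finset.mem_univ, true_and]
          rw [h0, ← hj] at hσ
          simp only [Phi_zero, Phi_succ] at hσ
          rw [Fin.succAbove_lt_iff_castSucc_lt] at hσ
          simpa [Fin.lt_def] using hσ
        · simp [Prod.ext_iff, h0, ← hj]
    rw [← h1]
    have h2 : (Finset.univ.filter fun j : Fin N => (τ j : ℕ) < (k : ℕ)).card
        = (Finset.univ.filter fun j : Fin N => (j : ℕ) < (k : ℕ)).card := by
      apply Finset.card_nbij (fun j : Fin N => τ j)
      · intro a ha; simp_all
      · intro a _ b _ h; exact τ.injective h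
      · intro b hb
        simp only [Finset.coe_filter, Set.mem_setOf_eq, Finset.mem_univ, true_and] at hb ⊢
        exact ⟨τ.symm b, by simpa using hb, by simp⟩
    rw [h2, card_filter_val_lt]
  · -- pairs with first coordinate ≠ 0
    symm
    apply Finset.card_nbij (fun p : Fin N × Fin N => (p.1.succ, p.2.succ))
    · intro a ha
      simp only [Finset.mem_coe, Finset.mem_filter, Finset.mem_univ, true_and] at ha ⊢
      refine ⟨⟨Fin.succ_lt_succ_iff.mpr ha.1, ?_⟩, Fin.succ_ne_zero _⟩
      simp only [Phi_succ]
      exact Fin.succAbove_lt_succAbove_iff.mpr ha.2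
    · intro a _ b _ h
      have h1 := Fin.succ_injective _ (congrArg Prod.fst h)
      have h2 := Fin.succ_injective _ (congrArg Prod.snd h)
      exact Prod.ext h1 h2
    · intro p hp
      simp only [Finset.coe_filter, Set.mem_setOf_eq, Finset.mem_univ, true_and] at hp
      obtain ⟨⟨hlt, hσ⟩, h0⟩ := hp
      obtain ⟨i, hi⟩ := Fin.exists_succ_eq_of_ne_zero h0
      have hne2 : p.2 ≠ 0 := by
        intro h
        rw [h] at hlt
        exact (not_lt.mpr (Fin.zero_le _)) hlt
      obtain ⟨j, hj⟩ := Fin.exists_succ_eq_of_ne_zero hne2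
      refine ⟨(i, j), ?_, by simp [hi, hj]⟩
      simp only [Finset.coe_filter, Set.mem_setOf_eq, Finset.mem_univ, true_and]
      rw [← hi, ← hj] at hlt hσ
      simp only [Phi_succ] at hσ
      exact ⟨Fin.succ_lt_succ_iff.mp hlt, Fin.succAbove_lt_succAbove_iff.mp hσ⟩

/-- the recursion
`⟨f ⊗ G, λ_n(f_1 ⊗ … ⊗ f_n)⟩_{⊗n}
 = ∑_{k=1}^n q^{k-1} ⟨f,f_k⟩ ⟨G, λ_{n-1}(f_1 ⊗ … f̂_k … ⊗ f_n)⟩_{⊗(n-1)}`,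
stated for elementary tensors `G = g_1 ⊗ … ⊗ g_{n-1}` (which determine both
sides by sesquilinearity): the inner product of elementary tensors is the
product of the inner products.  Here `n = N+1 ≥ 2`; permutations of `{1,…,n}`
are encoded as `Equiv.Perm (Fin (N+1))`, the `k`-th removal via `Fin.succAbove`,
and `q^{k-1}` becomes `q^(k : ℕ)` for `k : Fin (N+1)`. -/
theorem q_symmetrization_recursion {H : Type*} [NormedAddCommGroup H]
    [InnerProductSpace ℂ H] (N : ℕ) (hN : 1 ≤ N) (q : ℝ)
    (hq : -1 ≤ q ∧ q ≤ 1) (f : H) (g : Fin N → H) (fs : Fin (N + 1) → H) :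
    ∑ σ : Equiv.Perm (Fin (N + 1)), (q : ℂ) ^ inversions σ *
        ((inner ℂ f (fs (σ 0)) : ℂ) *
          ∏ i : Fin N, (inner ℂ (g i) (fs (σ i.succ)) : ℂ))
      = ∑ k : Fin (N + 1), (q : ℂ) ^ (k : ℕ) * (inner ℂ f (fs k) : ℂ) *
          ∑ τ : Equiv.Perm (Fin N), (q : ℂ) ^ inversions τ *
            ∏ i : Fin N, (inner ℂ (g i) (fs (k.succAbove (τ i))) : ℂ) := by
  have key := Fintype.sum_bijective (fun p : Fin (N + 1) × Equiv.Perm (Fin N) => Phi p.1 p.2)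
    Phi_bijective
    (fun p : Fin (N + 1) × Equiv.Perm (Fin N) => (q : ℂ) ^ inversions (Phi p.1 p.2) *
        ((inner ℂ f (fs (Phi p.1 p.2 0)) : ℂ) *
          ∏ i : Fin N, (inner ℂ (g i) (fs (Phi p.1 p.2 i.succ)) : ℂ)))
    (fun σ : Equiv.Perm (Fin (N + 1)) => (q : ℂ) ^ inversions σ *
        ((inner ℂ f (fs (σ 0)) : ℂ) *
          ∏ i : Fin N, (inner ℂ (g i) (fs (σ i.succ)) : ℂ)))
    (fun p => rfl)
  rw [← key, Fintype.sum_prod_type]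
  refine Finset.sum_congr rfl fun k _ => ?_
  simp only [Phi_zero, Phi_succ, inversions_Phi, pow_add, Finset.mul_sum]
  refine Finset.sum_congr rfl fun τ _ => ?_
  ring
end
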